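/- Let B be a complex Banach space, Ω ⊆ ℂ an open connected set, and F : Ω → B a map such that: (a) for every continuous linear functional φ ∈ B′ the map λ ↦ φ(F(λ)) is holomorphic on Ω; (b) if φ ∈ B′ satisfies φ(F(λ)) = 0 for all λ ∈ Ω, then φ = 0. Then for every subset U ⊆ Ω possessing an accumulation point that belongs to Ω, the linear span of {F(λ) : λ ∈ U} is dense in B. -/

import Mathlib

open Filter Set

/-- Key step in the proof of the Desch–Schappacher–Webb criterion: if `F : Ω → B` is
weakly holomorphic with separating range, then for any `U ⊆ Ω` having an accumulation
point inside `Ω`, the span of `F(U)` is dense in `B`. -/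
theorem span_of_weakly_holomorphic_family_dense
    {B : Type*} [NormedAddCommGroup B] [NormedSpace ℂ B]
    (Ω : Set ℂ) (hΩopen : IsOpen Ω) (hΩconn : IsConnected Ω)
    (F : ℂ → B)
    (hFhol : ∀ φ : B →L[ℂ] ℂ, DifferentiableOn ℂ (fun z => φ (F z)) Ω)
    (hFsep : ∀ φ : B →L[ℂ] ℂ, (∀ z ∈ Ω, φ (F z) = 0) → φ = 0)
    (U : Set ℂ) (hU : U ⊆ Ω) (z₀ : ℂ) (hz₀ : z₀ ∈ Ω) (hacc : AccPt z₀ (Filter.principal U)) :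
    Dense (↑(Submodule.span ℂ (F '' U)) : Set B) := by
  by_contra hnd
  -- find a point outside the closure of the span
  obtain ⟨x, hx⟩ : ∃ x : B, x ∉ closure (↑(Submodule.span ℂ (F '' U)) : Set B) := by
    by_contra h
    push_neg at h
    exact hnd fun y => h y
  set S : Submodule ℂ B := (Submodule.span ℂ (F '' U)).topologicalClosure with hS
  have hSclosed : IsClosed (S : Set B) := (Submodule.span ℂ (F '' U)).isClosed_topologicalClosure
  have hxS : x ∉ S := hx
  -- build a functional vanishing on S with φ x ≠ 0 via the quotient
  haveI : IsClosed (S : Set B) := hSclosed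
  have hmkx : (S.mkQ x : B ⧸ S) ≠ 0 := by
    simpa [Submodule.mkQ_apply, Submodule.Quotient.mk_eq_zero] using hxS
  obtain ⟨g, -, hg⟩ := exists_dual_vector ℂ (S.mkQ x) (norm_ne_zero_iff.2 hmkx)
  let φ : B →L[ℂ] ℂ := ⟨g.toLinearMap.comp S.mkQ, g.continuous.comp continuous_quot_mk⟩
  have hφx : φ x ≠ 0 := by
    have : φ x = ‖S.mkQ x‖ := by show g (S.mkQ x) = _; simpa using hg
    rw [this]
    exact_mod_cast norm_ne_zero_iff.2 hmkx
  have hφ0 : ∀ z ∈ U, φ (F z) = 0 := by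
    intro z hz
    have hmem : F z ∈ S :=
      Submodule.le_topologicalClosure _ (Submodule.subset_span ⟨z, hz, rfl⟩)
    have : (S.mkQ (F z) : B ⧸ S) = 0 := (Submodule.Quotient.mk_eq_zero S).2 hmem
    show g (S.mkQ (F z)) = 0
    rw [this, map_zero]
  -- identity theorem
  have hana : AnalyticOnNhd ℂ (fun z => φ (F z)) Ω := (hFhol φ).analyticOnNhd hΩopen
  have hfreq : ∃ᶠ z in nhdsWithin z₀ {z₀}ᶜ, φ (F z) = 0 := by
    rw [accPt_iff_frequently] at hacc
    rw [frequently_nhdsWithin_iff]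
    exact hacc.mono fun z ⟨hne, hzU⟩ => ⟨hφ0 z hzU, hne⟩
  have hEq : EqOn (fun z => φ (F z)) 0 Ω :=
    hana.eqOn_zero_of_preconnected_of_frequently_eq_zero hΩconn.isPreconnected hz₀ hfreq
  have : φ = 0 := hFsep φ fun z hz => hEq hz
  exact hφx (by simp [this])
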